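/- Let s : Fin K → ℕ with K ≥ 2, and suppose s' is obtained from s by incrementing exactly one coordinate k₀ by 1. If s_{k₀} is a strict maximum of s (s_{k₀} > s_j for all j ≠ k₀), then the population variance strictly increases: F(s') > F(s). -/
import Mathlib

lemma var_formula {K : ℕ} (hK : (K:ℝ) ≠ 0) (t : Fin K → ℝ) :
    (1 / (K : ℝ)) * ∑ k, (t k - (1 / (K : ℝ)) * ∑ j, t j) ^ 2 =
      (1 / (K : ℝ)) * ∑ k, (t k) ^ 2 - ((1 / (K : ℝ)) * ∑ j, t j) ^ 2 := by
  have h : ∑ k, (t k - (1 / (K : ℝ)) * ∑ j, t j) ^ 2 =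
      ∑ k, (t k)^2 - 2 * ((1 / (K : ℝ)) * ∑ j, t j) * ∑ j, t j
        + K * ((1 / (K : ℝ)) * ∑ j, t j)^2 := by
    simp only [sub_sq, Finset.sum_add_distrib, Finset.sum_sub_distrib,
      Finset.sum_const, Finset.card_univ, Fintype.card_fin, nsmul_eq_mul,
      ← Finset.sum_mul, ← Finset.mul_sum]
    ring
  rw [h]
  field_simp
  ring

theorem fairness_cost_strict_increase (K : ℕ) (hK : 2 ≤ K) (s : Fin K → ℕ)
    (k₀ : Fin K) (hmax : ∀ j, j ≠ k₀ → s j < s k₀)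
    (s' : Fin K → ℕ) (hs' : ∀ k, s' k = if k = k₀ then s k + 1 else s k) :
    (1 / (K : ℝ)) * ∑ k, ((s k : ℝ) - (1 / (K : ℝ)) * ∑ j, (s j : ℝ)) ^ 2 <
      (1 / (K : ℝ)) * ∑ k, ((s' k : ℝ) - (1 / (K : ℝ)) * ∑ j, (s' j : ℝ)) ^ 2 := by
  have hKR : (0:ℝ) < (K:ℝ) := by positivity
  have hK2 : (2:ℝ) ≤ (K:ℝ) := by exact_mod_cast hK
  have hKne : (K:ℝ) ≠ 0 := ne_of_gt hKR
  set S : ℝ := ∑ j, (s j : ℝ) with hS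
  set Q : ℝ := ∑ j, (s j : ℝ)^2 with hQ
  -- sums for s'
  have hsum' : ∑ j, (s' j : ℝ) = S + 1 := by
    have : ∀ j, (s' j : ℝ) = (s j : ℝ) + (if j = k₀ then (1:ℝ) else 0) := by
      intro j; rw [hs' j]; split <;> simp
    simp only [this, Finset.sum_add_distrib, Finset.sum_ite_eq', Finset.mem_univ,
      if_true, hS]
  have hsq' : ∑ j, (s' j : ℝ)^2 = Q + (2 * (s k₀ : ℝ) + 1) := by
    have : ∀ j, (s' j : ℝ)^2 = (s j : ℝ)^2 + (if j = k₀ then 2*(s k₀:ℝ)+1 else 0) := by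
      intro j; rw [hs' j]; split
      · rename_i h; subst h; push_cast; ring
      · simp
    simp only [this, Finset.sum_add_distrib, Finset.sum_ite_eq', Finset.mem_univ,
      if_true, hQ]
  -- bound: S + (K-1) ≤ K * s k₀ over ℕ
  have hbound : S + ((K:ℝ) - 1) ≤ (K:ℝ) * (s k₀ : ℝ) := by
    have hnat : (∑ j, s j) + (K - 1) ≤ K * s k₀ := by
      have h1 : ∑ j ∈ Finset.univ.erase k₀, (s j + 1) ≤
          ∑ j ∈ Finset.univ.erase k₀, s k₀ := by
        apply Finset.sum_le_sum
        intro j hj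
        exact hmax j (Finset.mem_erase.1 hj).1
      have hcard : (Finset.univ.erase k₀).card = K - 1 := by
        simp [Finset.card_erase_of_mem]
      have h2 : ∑ j ∈ Finset.univ.erase k₀, (s j + 1) =
          (∑ j ∈ Finset.univ.erase k₀, s j) + (K - 1) := by
        rw [Finset.sum_add_distrib]; simp [hcard]
      have h3 : ∑ j ∈ Finset.univ.erase k₀, s k₀ = (K - 1) * s k₀ := by
        simp [hcard, Finset.sum_const]
      have h4 : (∑ j, s j) = s k₀ + ∑ j ∈ Finset.univ.erase k₀, s j := by
        rw [← Finset.add_sum_erase _ s (Finset.mem_univ k₀)]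
      have h5 : (∑ j ∈ Finset.univ.erase k₀, s j) + (K-1) ≤ (K-1) * s k₀ := by
        rw [h2, h3] at h1; exact h1
      have h6 : K * s k₀ = (K-1) * s k₀ + s k₀ := by
        conv_lhs => rw [show K = (K-1)+1 from (Nat.succ_pred_eq_of_pos (by omega)).symm]
        rw [Nat.succ_mul]
      omega
    have := (Nat.cast_le (α := ℝ)).2 hnat
    push_cast [Nat.cast_sub (by omega : 1 ≤ K)] at this
    rw [hS]
    convert this using 2 <;> push_cast <;> ring_nf
  rw [var_formula hKne, var_formula hKne, hsum', hsq']
  have key : (K:ℝ) * (2 * (s k₀ : ℝ) + 1) > 2 * S + 1 := by nlinarith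
  have e1 : (1 / (K : ℝ)) * (Q + (2 * (s k₀:ℝ) + 1)) - ((1 / (K : ℝ)) * (S + 1))^2
      - ((1 / (K : ℝ)) * Q - ((1 / (K : ℝ)) * S)^2)
      = ((K:ℝ) * (2 * (s k₀ : ℝ) + 1) - (2 * S + 1)) / (K:ℝ)^2 := by
    field_simp; ring
  have hpos : ((K:ℝ) * (2 * (s k₀ : ℝ) + 1) - (2 * S + 1)) / (K:ℝ)^2 > 0 :=
    div_pos (by linarith) (by positivity)
  linarith [e1, hpos]
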